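/- The number of colored pairs Φ is not an ordinal potential function for the swap Schelling game with favorite nodes: there exist a finite connected graph G, window size w = 1, tolerance parameter τ = 0.3, disjoint agent sets A and B, a common favorite node for all agents, a bijective placement p, and an improving swap of two agents producing the placement p' such that Φ(p') > Φ(p). -/

import Mathlib

open SimpleGraph Finset

namespace Schelling

variable {V I : Type*}

/-- The `w`-neighborhood of a node `u`: all nodes `v ≠ u` with `d_G(u,v) ≤ w`. -/
def nbhd (G : SimpleGraph V) (w : ℕ) (u : V) : Set V :=
  {v | v ≠ u ∧ G.dist u v ≤ w}

/-- `|N⁺(p(x))|`: number of nodes in the `w`-neighborhood of `p x` occupied by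
agents of the same type as `x`. -/
noncomputable def sCount (G : SimpleGraph V) (w : ℕ) (tp : I → Bool) (p : I → V) (x : I) : ℕ :=
  {v | v ∈ nbhd G w (p x) ∧ ∃ y, p y = v ∧ tp y = tp x}.ncard

/-- `|N⁻(p(x))|`: number of nodes in the `w`-neighborhood of `p x` occupied by
agents of the other type. -/
noncomputable def dCount (G : SimpleGraph V) (w : ℕ) (tp : I → Bool) (p : I → V) (x : I) : ℕ :=
  {v | v ∈ nbhd G w (p x) ∧ ∃ y, p y = v ∧ tp y ≠ tp x}.ncard

/-- An agent is isolated if no node of its neighborhood is occupied. -/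
def isolated (G : SimpleGraph V) (w : ℕ) (tp : I → Bool) (p : I → V) (x : I) : Prop :=
  sCount G w tp p x + dCount G w tp p x = 0

/-- The (scalar) cost of agent `x`: `τ` if isolated, otherwise
`max 0 (τ - |N⁺|/(|N⁺| + |N⁻|))`. -/
noncomputable def ucost (G : SimpleGraph V) (w : ℕ) (τ : ℝ) (tp : I → Bool) (p : I → V)
    (x : I) : ℝ :=
  if sCount G w tp p x + dCount G w tp p x = 0 then τ
  else max 0 (τ - (sCount G w tp p x : ℝ) / ((sCount G w tp p x : ℝ) + (dCount G w tp p x : ℝ)))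

/-- An agent is happy if it is not isolated and its local happiness ratio is at least `τ`. -/
def happy (G : SimpleGraph V) (w : ℕ) (τ : ℝ) (tp : I → Bool) (p : I → V) (x : I) : Prop :=
  sCount G w tp p x + dCount G w tp p x ≠ 0 ∧
    τ ≤ (sCount G w tp p x : ℝ) / ((sCount G w tp p x : ℝ) + (dCount G w tp p x : ℝ))

/-- The vector cost of agent `x`: scalar cost together with `d_G(fav_x, p x) + 1`,
to be compared lexicographically. -/
noncomputable def vcost (G : SimpleGraph V) (w : ℕ) (τ : ℝ) (tp : I → Bool) (fav : I → V)
    (p : I → V) (x : I) : ℝ × ℕ :=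
  (ucost G w τ tp p x, G.dist (fav x) (p x) + 1)

/-- The number of colored pairs `Φ(p) = (1/2) · Σ_x |N⁻(p(x))|`. -/
noncomputable def Phi [Fintype I] (G : SimpleGraph V) (w : ℕ) (tp : I → Bool) (p : I → V) : ℝ :=
  (1 / 2) * ∑ x : I, (dCount G w tp p x : ℝ)

/-- The pair potential `(Φ(p), Σ_x d_G(fav_x, p x))`, compared lexicographically. -/
noncomputable def PhiPair [Fintype I] (G : SimpleGraph V) (w : ℕ) (tp : I → Bool) (fav : I → V)
    (p : I → V) : ℝ × ℕ :=
  (Phi G w tp p, ∑ x : I, G.dist (fav x) (p x))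

/-- The placement obtained from `p` by swapping the locations of agents `x` and `y`. -/
def swapP [DecidableEq I] (p : I → V) (x y : I) : I → V := p ∘ Equiv.swap x y

/-- The agents of type `A`. -/
def typeA [Fintype I] (tp : I → Bool) : Finset I := Finset.univ.filter (fun i => tp i = true)

/-- The agents of type `B`. -/
def typeB [Fintype I] (tp : I → Bool) : Finset I := Finset.univ.filter (fun i => tp i = false)

/-- A placement is stable for the uniform SSG if no pair of agents can both strictly
decrease their cost by swapping. -/
def uStable (G : SimpleGraph V) (w : ℕ) (τ : ℝ) (tp : I → Bool) (p : I → V)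
    [DecidableEq I] : Prop :=
  ∀ x y : I, ¬ (ucost G w τ tp (swapP p x y) x < ucost G w τ tp p x ∧
                ucost G w τ tp (swapP p x y) y < ucost G w τ tp p y)

/-- A placement is stable for the SSG with favorite nodes if no pair of agents can both
strictly lexicographically decrease their cost vector by swapping. -/
def vStable (G : SimpleGraph V) (w : ℕ) (τ : ℝ) (tp : I → Bool) (fav : I → V) (p : I → V)
    [DecidableEq I] : Prop :=
  ∀ x y : I, ¬ (toLex (vcost G w τ tp fav (swapP p x y) x) < toLex (vcost G w τ tp fav p x) ∧
                toLex (vcost G w τ tp fav (swapP p x y) y) < toLex (vcost G w τ tp fav p y))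



open Classical in
/-- The weight of the (ordered) pair of nodes `(u,v)` in the jump-game potential:
`1` if both are occupied by agents of different types, `1/3` if at least one is empty,
and `0` otherwise. -/
noncomputable def edgeW (tp : I → Bool) (p : I → V) (u v : V) : ℝ :=
  if ∃ x y : I, p x = u ∧ p y = v ∧ tp x ≠ tp y then 1
  else if (∀ x : I, p x ≠ u) ∨ (∀ y : I, p y ≠ v) then 1 / 3
  else 0

open Classical in
/-- The edge-weight potential `Φ(p) = Σ_{e ∈ E} w_e(p)`, written as half the sum over
ordered adjacent pairs (each edge is counted twice, and `edgeW` is symmetric). -/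
noncomputable def jumpPhi [Fintype V] (G : SimpleGraph V) (tp : I → Bool) (p : I → V) : ℝ :=
  (1 / 2) * ∑ u : V, ∑ v : V, if G.Adj u v then edgeW tp p u v else 0

/-- A placement is stable for the uniform JSG if no agent can strictly decrease her cost
by jumping to an empty node. -/
def jStable (G : SimpleGraph V) (w : ℕ) (τ : ℝ) (tp : I → Bool) (p : I → V)
    [DecidableEq I] : Prop :=
  ∀ (x : I) (v : V), v ∉ Set.range p →
    ¬ (ucost G w τ tp (Function.update p x v) x < ucost G w τ tp p x)

/-- The social cost of a placement: the number of unhappy agents together with the total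
distance cost, compared lexicographically. -/
noncomputable def socialCost [Fintype I] (G : SimpleGraph V) (w : ℕ) (τ : ℝ) (tp : I → Bool)
    (fav : I → V) (p : I → V) : ℕ × ℕ :=
  ({x : I | ¬ happy G w τ tp p x}.ncard, ∑ x : I, (G.dist (fav x) (p x) + 1))


end Schelling

open Schelling


namespace CFex

/-- Adjacency (as a `Bool`) of the counterexample graph: a star at `0` with leaves
`3`, `4`, `5`, plus a path `0 - 1 - 2`. -/
def adjB : Fin 6 → Fin 6 → Bool := fun a b =>
  decide ((a, b) ∈ [((0 : Fin 6), (1 : Fin 6)), (1, 0), (1, 2), (2, 1),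
    (0, 3), (3, 0), (0, 4), (4, 0), (0, 5), (5, 0)])

/-- The counterexample graph. -/
def G : SimpleGraph (Fin 6) where
  Adj a b := adjB a b = true
  symm := ⟨fun a b h => (by decide : ∀ a b : Fin 6, adjB a b = true → adjB b a = true) a b h⟩
  loopless := ⟨fun a h => (by decide : ∀ a : Fin 6, ¬ adjB a a = true) a h⟩

instance : DecidableRel G.Adj := fun _ _ => instDecidableEqBool _ _

lemma hG : G.Connected := by
  have h0 : ∀ v : Fin 6, G.Reachable 0 v := by
    intro v
    fin_cases v
    · exact SimpleGraph.Reachable.refl 0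
    · exact SimpleGraph.Adj.reachable (by decide)
    · exact (SimpleGraph.Adj.reachable (show G.Adj 0 1 by decide)).trans
        (SimpleGraph.Adj.reachable (show G.Adj 1 2 by decide))
    · exact SimpleGraph.Adj.reachable (by decide)
    · exact SimpleGraph.Adj.reachable (by decide)
    · exact SimpleGraph.Adj.reachable (by decide)
  have hpre : G.Preconnected := fun u v => (h0 u).symm.trans (h0 v)
  exact SimpleGraph.Connected.mk hpre

/-- For a connected graph, the `1`-neighborhood is the set of adjacent vertices. -/
lemma nbhd_one {V : Type*} {H : SimpleGraph V} (hH : H.Connected) (u : V) :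
    nbhd H 1 u = {v | H.Adj u v} := by
  ext v
  constructor
  · rintro ⟨hne, hle⟩
    have hpos : 0 < H.dist u v := hH.pos_dist_of_ne (Ne.symm hne)
    have : H.dist u v = 1 := le_antisymm hle hpos
    exact (SimpleGraph.dist_eq_one_iff_adj).mp this
  · intro h
    exact ⟨(h.ne).symm, le_of_eq ((SimpleGraph.dist_eq_one_iff_adj).mpr h)⟩

lemma ncard_setOf {α : Type*} [Fintype α] (P : α → Prop) [DecidablePred P] :
    {a | P a}.ncard = (Finset.univ.filter P).card := by
  rw [Set.ncard_eq_toFinset_card', Set.toFinset_setOf]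

lemma sCount_eq {V I : Type*} [Fintype V] [DecidableEq V] [Fintype I]
    {H : SimpleGraph V} [DecidableRel H.Adj] (hH : H.Connected)
    (tp : I → Bool) (p : I → V) (x : I) :
    sCount H 1 tp p x =
      (Finset.univ.filter fun v => H.Adj (p x) v ∧ ∃ y, p y = v ∧ tp y = tp x).card := by
  unfold sCount
  have hset : {v | v ∈ nbhd H 1 (p x) ∧ ∃ y, p y = v ∧ tp y = tp x} =
      {v | H.Adj (p x) v ∧ ∃ y, p y = v ∧ tp y = tp x} := by
    simp only [nbhd_one hH, Set.mem_setOf_eq]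
  rw [hset, ncard_setOf]

lemma dCount_eq {V I : Type*} [Fintype V] [DecidableEq V] [Fintype I]
    {H : SimpleGraph V} [DecidableRel H.Adj] (hH : H.Connected)
    (tp : I → Bool) (p : I → V) (x : I) :
    dCount H 1 tp p x =
      (Finset.univ.filter fun v => H.Adj (p x) v ∧ ∃ y, p y = v ∧ tp y ≠ tp x).card := by
  unfold dCount
  have hset : {v | v ∈ nbhd H 1 (p x) ∧ ∃ y, p y = v ∧ tp y ≠ tp x} =
      {v | H.Adj (p x) v ∧ ∃ y, p y = v ∧ tp y ≠ tp x} := by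
    simp only [nbhd_one hH, Set.mem_setOf_eq]
  rw [hset, ncard_setOf]

/-- Types of the agents: agents `2` and `3` are of type `A` (true), others type `B`. -/
def tp : Fin 6 → Bool := ![false, false, true, true, false, false]

/-- The placement: agent `i` sits on node `i`. -/
def p : Fin 6 → Fin 6 := id

def p' : Fin 6 → Fin 6 := swapP p 2 0

lemma hp' : p' = fun i => Equiv.swap (2 : Fin 6) 0 i := rfl

lemma dist_20 : G.dist 2 0 = 2 := by
  have h21 : G.Adj 2 1 := by decide
  have h10 : G.Adj 1 0 := by decide
  have hle : G.dist 2 0 ≤ 2 := by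
    have := SimpleGraph.dist_le (SimpleGraph.Walk.cons h21 (SimpleGraph.Walk.cons h10 SimpleGraph.Walk.nil))
    simpa using this
  have hpos : 0 < G.dist 2 0 := hG.pos_dist_of_ne (by decide)
  have hne1 : G.dist 2 0 ≠ 1 := by
    intro h
    exact absurd (SimpleGraph.dist_eq_one_iff_adj.mp h) (by decide)
  omega

end CFex

/-- The number of colored pairs `Φ` is not an ordinal potential function for
the swap Schelling game with favorite nodes: there exist a finite connected graph `G`,
window size `w = 1`, tolerance `τ = 0.3`, disjoint agent sets, a common favorite node, a
bijective placement `p` and an improving swap producing `p'` with `Φ(p') > Φ(p)`. -/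
theorem cfSSG_Phi_not_potential :
    ∃ (V : Type) (_ : Fintype V) (I : Type) (_ : Fintype I) (_ : DecidableEq I)
      (G : SimpleGraph V) (tp : I → Bool) (fav : I → V) (p : I → V) (x y : I),
      G.Connected ∧
      (∃ v0 : V, ∀ i : I, fav i = v0) ∧
      2 ≤ (typeA tp).card ∧ 2 ≤ (typeB tp).card ∧
      Function.Bijective p ∧
      toLex (vcost G 1 (3 / 10) tp fav (swapP p x y) x) <
        toLex (vcost G 1 (3 / 10) tp fav p x) ∧
      toLex (vcost G 1 (3 / 10) tp fav (swapP p x y) y) <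
        toLex (vcost G 1 (3 / 10) tp fav p y) ∧
      Phi G 1 tp p < Phi G 1 tp (swapP p x y) := by
  have hG := CFex.hG
  refine ⟨Fin 6, inferInstance, Fin 6, inferInstance, inferInstance, CFex.G, CFex.tp,
    (fun _ => (2 : Fin 6)), CFex.p, 2, 0, hG, ⟨2, fun _ => rfl⟩, by decide, by decide,
    Function.bijective_id, ?_, ?_, ?_⟩
  · -- agent x = 2 strictly improves its ratio
    have hsx : sCount CFex.G 1 CFex.tp CFex.p 2 = 0 := by
      rw [CFex.sCount_eq hG]; decide
    have hdx : dCount CFex.G 1 CFex.tp CFex.p 2 = 1 := by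
      rw [CFex.dCount_eq hG]; decide
    have hsx' : sCount CFex.G 1 CFex.tp (swapP CFex.p 2 0) 2 = 1 := by
      rw [CFex.sCount_eq hG]; decide
    have hdx' : dCount CFex.G 1 CFex.tp (swapP CFex.p 2 0) 2 = 3 := by
      rw [CFex.dCount_eq hG]; decide
    have hux : ucost CFex.G 1 (3 / 10) CFex.tp CFex.p 2 = 3 / 10 := by
      rw [ucost, hsx, hdx]; norm_num
    have hux' : ucost CFex.G 1 (3 / 10) CFex.tp (swapP CFex.p 2 0) 2 = 1 / 20 := by
      rw [ucost, hsx', hdx']; norm_num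
    rw [Prod.Lex.lt_iff]
    left
    simp only [vcost]
    rw [hux', hux]
    norm_num
  · -- agent y = 0 keeps its ratio and moves closer to the favorite node 2
    have hsy : sCount CFex.G 1 CFex.tp CFex.p 0 = 3 := by
      rw [CFex.sCount_eq hG]; decide
    have hdy : dCount CFex.G 1 CFex.tp CFex.p 0 = 1 := by
      rw [CFex.dCount_eq hG]; decide
    have hsy' : sCount CFex.G 1 CFex.tp (swapP CFex.p 2 0) 0 = 1 := by
      rw [CFex.sCount_eq hG]; decide
    have hdy' : dCount CFex.G 1 CFex.tp (swapP CFex.p 2 0) 0 = 0 := by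
      rw [CFex.dCount_eq hG]; decide
    have huy : ucost CFex.G 1 (3 / 10) CFex.tp CFex.p 0 = 0 := by
      rw [ucost, hsy, hdy]; norm_num
    have huy' : ucost CFex.G 1 (3 / 10) CFex.tp (swapP CFex.p 2 0) 0 = 0 := by
      rw [ucost, hsy', hdy']; norm_num
    rw [Prod.Lex.lt_iff]
    right
    simp only [vcost]
    refine ⟨by rw [huy', huy]; rfl, ?_⟩
    have h1 : (swapP CFex.p 2 0) 0 = 2 := by decide
    have h2 : CFex.p 0 = 0 := rfl
    rw [h1, h2, SimpleGraph.dist_self, CFex.dist_20]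
    norm_num
  · -- Phi increases from 2 to 3
    have d0 : dCount CFex.G 1 CFex.tp CFex.p 0 = 1 := by
      rw [CFex.dCount_eq hG]; decide
    have d1 : dCount CFex.G 1 CFex.tp CFex.p 1 = 1 := by
      rw [CFex.dCount_eq hG]; decide
    have d2 : dCount CFex.G 1 CFex.tp CFex.p 2 = 1 := by
      rw [CFex.dCount_eq hG]; decide
    have d3 : dCount CFex.G 1 CFex.tp CFex.p 3 = 1 := by
      rw [CFex.dCount_eq hG]; decide
    have d4 : dCount CFex.G 1 CFex.tp CFex.p 4 = 0 := by
      rw [CFex.dCount_eq hG]; decide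
    have d5 : dCount CFex.G 1 CFex.tp CFex.p 5 = 0 := by
      rw [CFex.dCount_eq hG]; decide
    have e0 : dCount CFex.G 1 CFex.tp (swapP CFex.p 2 0) 0 = 0 := by
      rw [CFex.dCount_eq hG]; decide
    have e1 : dCount CFex.G 1 CFex.tp (swapP CFex.p 2 0) 1 = 1 := by
      rw [CFex.dCount_eq hG]; decide
    have e2 : dCount CFex.G 1 CFex.tp (swapP CFex.p 2 0) 2 = 3 := by
      rw [CFex.dCount_eq hG]; decide
    have e3 : dCount CFex.G 1 CFex.tp (swapP CFex.p 2 0) 3 = 0 := by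
      rw [CFex.dCount_eq hG]; decide
    have e4 : dCount CFex.G 1 CFex.tp (swapP CFex.p 2 0) 4 = 1 := by
      rw [CFex.dCount_eq hG]; decide
    have e5 : dCount CFex.G 1 CFex.tp (swapP CFex.p 2 0) 5 = 1 := by
      rw [CFex.dCount_eq hG]; decide
    rw [Phi, Phi, Fin.sum_univ_six, Fin.sum_univ_six,
      d0, d1, d2, d3, d4, d5, e0, e1, e2, e3, e4, e5]
    norm_num
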